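/- Let f ∈ K⟨x₁,…,x_g⟩ be a noncommutative polynomial of degree d containing, with nonzero coefficient, the monomial x₁u₀ for a word u₀ of length d−1, and let X₁,…,X_g be linear operators on the span V of all words of length ≤ d−1 together with the words of length d except x₁u₀, defined by Xₖ(w) = xₖw when |xₖw| ≤ d and xₖw ≠ x₁u₀, X₁(u₀) = h (where f = c·x₁u₀ − h' with h ∈ V encoding the remaining terms of f/c), and Xₖ(w) arbitrary (as in the paper) on words of length d. Then f(X)·1 = 0, i.e., the vector obtained by evaluating f at X and applying it to the empty word is zero. -/
import Mathlib


/-- The basis-vector embedding of admissible words (length ≤ d, not equal to x₁u₀)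
into the vector space `V` they span; inadmissible words map to `0`. -/
noncomputable def wordVec (K : Type*) [Field K] (g d : ℕ) (u₀ : List (Fin (g + 1))) :
    List (Fin (g + 1)) →
      ({w : List (Fin (g + 1)) // w.length ≤ d ∧ w ≠ (0 : Fin (g + 1)) :: u₀} →₀ K) :=
  fun w =>
    if hw : w.length ≤ d ∧ w ≠ (0 : Fin (g + 1)) :: u₀ then Finsupp.single ⟨w, hw⟩ 1 else 0

theorem kernel_vector_of_truncated_regular_representation (K : Type*) [Field K] [CharZero K]
    (g d : ℕ) (hd : 0 < d) (u₀ : List (Fin (g + 1))) (hu : u₀.length = d - 1)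
    (f : List (Fin (g + 1)) →₀ K)
    (hsupp : ∀ w ∈ f.support, w.length ≤ d)
    (hc : f ((0 : Fin (g + 1)) :: u₀) ≠ 0)
    (X : Fin (g + 1) →
      Module.End K ({w : List (Fin (g + 1)) // w.length ≤ d ∧ w ≠ (0 : Fin (g + 1)) :: u₀} →₀ K))
    (h : {w : List (Fin (g + 1)) // w.length ≤ d ∧ w ≠ (0 : Fin (g + 1)) :: u₀} →₀ K)
    (hh : f ((0 : Fin (g + 1)) :: u₀) • h =
      - ∑ w ∈ f.support.erase ((0 : Fin (g + 1)) :: u₀), f w • wordVec K g d u₀ w)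
    (hXstep : ∀ (k : Fin (g + 1)) (w : List (Fin (g + 1))), w.length ≤ d - 1 →
      (k :: w) ≠ (0 : Fin (g + 1)) :: u₀ →
      X k (wordVec K g d u₀ w) = wordVec K g d u₀ (k :: w))
    (hX1 : X 0 (wordVec K g d u₀ u₀) = h) :
    (∑ w ∈ f.support, f w • ((w.map X).prod)) (wordVec K g d u₀ []) = 0 := by
  classical
  have hlen0 : ((0 : Fin (g + 1)) :: u₀).length = d := by
    simp [hu]; omega
  have key : ∀ w : List (Fin (g + 1)), w.length ≤ d → w ≠ (0 : Fin (g + 1)) :: u₀ →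
      ((w.map X).prod) (wordVec K g d u₀ []) = wordVec K g d u₀ w := by
    intro w
    induction w with
    | nil => intro _ _; simp
    | cons k w ih =>
      intro hlw hne
      have hlw' : w.length + 1 ≤ d := by simpa using hlw
      have hw1 : w.length ≤ d - 1 := by omega
      have hwne : w ≠ (0 : Fin (g + 1)) :: u₀ := by
        intro hEq
        have : w.length = d := by rw [hEq, hlen0]
        omega
      have ihw := ih (by omega) hwne
      simp only [List.map_cons, List.prod_cons, Module.End.mul_apply]
      rw [ihw, hXstep k w hw1 hne]
  have hprod0 : ((((0 : Fin (g + 1)) :: u₀).map X).prod) (wordVec K g d u₀ []) = h := by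
    have hu0len : u₀.length ≤ d := by omega
    have hu0ne : u₀ ≠ (0 : Fin (g + 1)) :: u₀ := by
      intro hEq
      have := congrArg List.length hEq
      simp at this
    simp only [List.map_cons, List.prod_cons, Module.End.mul_apply]
    rw [key u₀ hu0len hu0ne, hX1]
  have hmem : ((0 : Fin (g + 1)) :: u₀) ∈ f.support := Finsupp.mem_support_iff.mpr hc
  rw [LinearMap.sum_apply, ← Finset.add_sum_erase _ _ hmem]
  have herase : ∑ w ∈ f.support.erase ((0 : Fin (g + 1)) :: u₀),
      (f w • ((w.map X).prod)) (wordVec K g d u₀ []) =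
      ∑ w ∈ f.support.erase ((0 : Fin (g + 1)) :: u₀), f w • wordVec K g d u₀ w := by
    apply Finset.sum_congr rfl
    intro w hw
    have hwmem := Finset.mem_of_mem_erase hw
    have hwne := Finset.ne_of_mem_erase hw
    rw [LinearMap.smul_apply, key w (hsupp w hwmem) hwne]
  rw [herase, LinearMap.smul_apply, hprod0, hh]
  simp
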